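/- If a family of convex hulls of subsets of n points in general position satisfies pairwise nonempty intersection and that no hull contains another (but triple intersections are unrestricted), then the family can be as large as the number of triples obtained by splitting n points in convex position into three arcs of size n/3 and taking one point from each arc; in particular there exist such families of size (n/3)^3 for n divisible by 3. -/

import Mathlib

open Finset

abbrev Pt : Type := ℝ × ℝ

/-- 2D cross product (determinant) of two vectors. -/
def cross2 (u v : Pt) : ℝ := u.1 * v.2 - u.2 * v.1

/-- The points of `P` are in general position: no three of them are collinear. -/
def GenPos (P : Finset Pt) : Prop :=
  ∀ a ∈ P, ∀ b ∈ P, ∀ c ∈ P, a ≠ b → a ≠ c → b ≠ c → ¬ Collinear ℝ ({a, b, c} : Set Pt)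

/-- The points of `P` are in convex position. -/
def ConvexPos (P : Finset Pt) : Prop :=
  ∀ x ∈ P, x ∉ convexHull ℝ (↑(P.erase x) : Set Pt)

/-- The convex hull of a finite point set. -/
def hull (S : Finset Pt) : Set Pt := convexHull ℝ (↑S : Set Pt)

/-- `C(𝒮)` is a convex hull thrackle on `P`: the sets are subsets of `P`, hulls are
pairwise distinct, no hull is contained in another, any two hulls intersect, and the
intersection of any three distinct hulls is contained in `P`. -/
def CHT (P : Finset Pt) (𝒮 : Finset (Finset Pt)) : Prop :=
  GenPos P ∧
  (∀ S ∈ 𝒮, S ⊆ P) ∧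
  (∀ S ∈ 𝒮, ∀ T ∈ 𝒮, hull S = hull T → S = T) ∧
  (∀ S ∈ 𝒮, ∀ T ∈ 𝒮, S ≠ T → ¬ hull S ⊆ hull T) ∧
  (∀ S ∈ 𝒮, ∀ T ∈ 𝒮, S ≠ T → (hull S ∩ hull T).Nonempty) ∧
  (∀ S ∈ 𝒮, ∀ T ∈ 𝒮, ∀ U ∈ 𝒮, S ≠ T → S ≠ U → T ≠ U →
    hull S ∩ hull T ∩ hull U ⊆ (↑P : Set Pt))

noncomputable def pf (t : ℝ) : Pt := (t, t^2)

lemma pf_inj : Function.Injective pf := fun a b h => congrArg Prod.fst h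

noncomputable def g (n : ℕ) : Pt := pf n

lemma g_inj : Function.Injective g := by
  intro a b h
  have := pf_inj h
  exact_mod_cast this

lemma collinear_cross {a b c : Pt} (h : Collinear ℝ ({a, b, c} : Set Pt)) :
    cross2 (b - a) (c - a) = 0 := by
  rw [collinear_iff_of_mem (Set.mem_insert a _)] at h
  obtain ⟨v, hv⟩ := h
  obtain ⟨rb, hb⟩ := hv b (by simp)
  obtain ⟨rc, hc⟩ := hv c (by simp)
  have hb' : b - a = rb • v := by rw [hb]; simp [vadd_eq_add]
  have hc' : c - a = rc • v := by rw [hc]; simp [vadd_eq_add]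
  rw [hb', hc']
  simp only [cross2, Prod.smul_fst, Prod.smul_snd, smul_eq_mul]
  ring

lemma cross_pf (s t u : ℝ) :
    cross2 (pf t - pf s) (pf u - pf s) = (t - s) * (u - s) * (u - t) := by
  simp only [cross2, pf, Prod.fst_sub, Prod.snd_sub]
  ring

lemma sq_ge_one {i j : ℕ} (h : i ≠ j) : (1:ℝ) ≤ ((i:ℝ) - (j:ℝ))^2 := by
  rcases lt_or_gt_of_ne h with hl | hl
  · have : (i:ℝ) + 1 ≤ (j:ℝ) := by exact_mod_cast hl
    nlinarith
  · have : (j:ℝ) + 1 ≤ (i:ℝ) := by exact_mod_cast hl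
    nlinarith

lemma mem_chord {p q x : ℝ} (hpq : p < q) (h1 : p ≤ x) (h2 : x ≤ q) :
    ((x, (p+q)*x - p*q) : Pt) ∈ segment ℝ (pf p) (pf q) := by
  have hqp : (0:ℝ) < q - p := by linarith
  refine ⟨(q - x)/(q - p), (x - p)/(q - p),
    div_nonneg (by linarith) (by linarith), div_nonneg (by linarith) (by linarith), ?_, ?_⟩
  · field_simp; ring
  · have h0 : q - p ≠ 0 := ne_of_gt hqp
    simp only [pf, Prod.smul_mk, smul_eq_mul, Prod.mk_add_mk, Prod.mk.injEq]
    constructor <;> (field_simp; ring)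

lemma chords_cross {p q r s : ℝ} (h1 : p < r) (h2 : r < q) (h3 : q < s) :
    ∃ z : Pt, z ∈ segment ℝ (pf p) (pf q) ∧ z ∈ segment ℝ (pf r) (pf s) := by
  have hd : (0:ℝ) < r + s - p - q := by linarith
  set x := (r*s - p*q)/(r + s - p - q) with hx
  have hrx : r ≤ x := by
    rw [hx, le_div_iff₀ hd]
    nlinarith [mul_nonneg (by linarith : (0:ℝ) ≤ r - p) (by linarith : (0:ℝ) ≤ q - r)]
  have hxq : x ≤ q := by
    rw [hx, div_le_iff₀ hd]
    nlinarith [mul_nonneg (by linarith : (0:ℝ) ≤ q - r) (by linarith : (0:ℝ) ≤ s - q)]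
  have heq : (p+q)*x - p*q = (r+s)*x - r*s := by
    rw [hx]; field_simp; ring
  exact ⟨(x, (p+q)*x - p*q), mem_chord (by linarith) (by linarith) hxq,
    heq ▸ mem_chord (by linarith) hrx (by linarith)⟩

lemma seg_sub_hull {S : Finset Pt} {a b : Pt} (ha : a ∈ S) (hb : b ∈ S) :
    segment ℝ a b ⊆ hull S :=
  (convex_convexHull ℝ _).segment_subset (subset_convexHull ℝ _ (Finset.mem_coe.2 ha))
    (subset_convexHull ℝ _ (Finset.mem_coe.2 hb))

lemma subset_of_hull_subset {P S T : Finset Pt} (hP : ConvexPos P) (hS : S ⊆ P) (hT : T ⊆ P)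
    (h : hull S ⊆ hull T) : S ⊆ T := by
  intro x hx
  by_contra hxT
  have hxP : x ∈ P := hS hx
  have h1 : x ∈ hull T := h (subset_convexHull ℝ _ (Finset.mem_coe.2 hx))
  have h2 : (↑T : Set Pt) ⊆ (↑(P.erase x) : Set Pt) := by
    intro y hy
    rw [Finset.coe_erase]
    exact ⟨hT hy, by rintro rfl; exact hxT hy⟩
  exact hP x hxP (convexHull_mono h2 h1)

noncomputable def tri (m i j k : ℕ) : Finset Pt := {g i, g (m + j), g (2*m + k)}

lemma tri_card {m i j k : ℕ} (hi : i < m) (hj : j < m) : (tri m i j k).card = 3 := by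
  rw [tri, card_insert_of_notMem, card_insert_of_notMem, card_singleton]
  · simp only [mem_singleton]
    exact g_inj.ne (by omega)
  · simp only [mem_insert, mem_singleton]
    push_neg
    exact ⟨g_inj.ne (by omega), g_inj.ne (by omega)⟩

lemma tri_inj {m i j k i' j' k' : ℕ} (hi : i < m) (hj : j < m)
    (hi' : i' < m) (hj' : j' < m)
    (h : tri m i j k = tri m i' j' k') : i = i' ∧ j = j' ∧ k = k' := by
  have h1 : g i ∈ tri m i' j' k' := h ▸ (by simp [tri])
  have h2 : g (m+j) ∈ tri m i' j' k' := h ▸ (by simp [tri])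
  have h3 : g (2*m+k) ∈ tri m i' j' k' := h ▸ (by simp [tri])
  simp only [tri, mem_insert, mem_singleton] at h1 h2 h3
  have e1 : i = i' ∨ i = m + j' ∨ i = 2*m + k' := by
    rcases h1 with h|h|h
    exacts [Or.inl (g_inj h), Or.inr (Or.inl (g_inj h)), Or.inr (Or.inr (g_inj h))]
  have e2 : m + j = i' ∨ m + j = m + j' ∨ m + j = 2*m + k' := by
    rcases h2 with h|h|h
    exacts [Or.inl (g_inj h), Or.inr (Or.inl (g_inj h)), Or.inr (Or.inr (g_inj h))]
  have e3 : 2*m + k = i' ∨ 2*m + k = m + j' ∨ 2*m + k = 2*m + k' := by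
    rcases h3 with h|h|h
    exacts [Or.inl (g_inj h), Or.inr (Or.inl (g_inj h)), Or.inr (Or.inr (g_inj h))]
  omega

lemma tri_mem_left {m i j k : ℕ} : g i ∈ tri m i j k := by simp [tri]
lemma tri_mem_mid {m i j k : ℕ} : g (m + j) ∈ tri m i j k := by simp [tri]
lemma tri_mem_right {m i j k : ℕ} : g (2*m + k) ∈ tri m i j k := by simp [tri]

/-- Without the triple-intersection condition, families of pairwise intersecting,
containment-free convex hulls on `n = 3m` points can have size `(n/3)^3 = m^3`. -/
theorem exists_pairwise_intersecting_family_cubed (m : ℕ) (hm : 0 < m) :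
    ∃ (P : Finset Pt) (𝒮 : Finset (Finset Pt)),
      GenPos P ∧ ConvexPos P ∧ P.card = 3 * m ∧
      (∀ S ∈ 𝒮, S ⊆ P) ∧
      (∀ S ∈ 𝒮, ∀ T ∈ 𝒮, hull S = hull T → S = T) ∧
      (∀ S ∈ 𝒮, ∀ T ∈ 𝒮, S ≠ T → ¬ hull S ⊆ hull T) ∧
      (∀ S ∈ 𝒮, ∀ T ∈ 𝒮, S ≠ T → (hull S ∩ hull T).Nonempty) ∧
      𝒮.card = m ^ 3 := by
  set P := (range (3*m)).image g with hPdef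
  set 𝒮 := (range m ×ˢ range m ×ˢ range m).image (fun x => tri m x.1 x.2.1 x.2.2) with h𝒮def
  have hmem𝒮 : ∀ S ∈ 𝒮, ∃ i j k, i < m ∧ j < m ∧ k < m ∧ S = tri m i j k := by
    intro S hS
    rw [h𝒮def, mem_image] at hS
    obtain ⟨⟨i, j, k⟩, h1, rfl⟩ := hS
    simp only [mem_product, mem_range] at h1
    exact ⟨i, j, k, h1.1, h1.2.1, h1.2.2, rfl⟩
  have hcp : ConvexPos P := by
    intro x hx hmem
    simp only [hPdef, mem_image, mem_range] at hx
    obtain ⟨i, -, rfl⟩ := hx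
    set K : Set Pt := {p : Pt | 1 ≤ p.2 - 2*(i:ℝ)*p.1 + (i:ℝ)^2} with hK
    have hconv : Convex ℝ K := by
      intro p hp q hq a b ha hb hab
      simp only [hK, Set.mem_setOf_eq, Prod.fst_add, Prod.snd_add, Prod.smul_fst,
        Prod.smul_snd, smul_eq_mul] at *
      nlinarith [mul_le_mul_of_nonneg_left hp ha, mul_le_mul_of_nonneg_left hq hb]
    have hsub : (↑(P.erase (g i)) : Set Pt) ⊆ K := by
      intro y hy
      rw [Finset.coe_erase] at hy
      obtain ⟨hy1, hy2⟩ := hy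
      simp only [hPdef, Finset.mem_coe, mem_image, mem_range] at hy1
      obtain ⟨j, -, rfl⟩ := hy1
      have hij : j ≠ i := fun h => hy2 (Set.mem_singleton_iff.2 (by rw [h]))
      simp only [hK, Set.mem_setOf_eq, g, pf]
      have := sq_ge_one hij
      nlinarith
    have := convexHull_min hsub hconv hmem
    simp only [hK, Set.mem_setOf_eq, g, pf] at this
    nlinarith
  have hPsub : ∀ S ∈ 𝒮, S ⊆ P := by
    intro S hS
    obtain ⟨i, j, k, hi, hj, hk, rfl⟩ := hmem𝒮 S hS
    intro y hy
    simp only [tri, mem_insert, mem_singleton] at hy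
    simp only [hPdef, mem_image, mem_range]
    rcases hy with rfl | rfl | rfl
    · exact ⟨i, by omega, rfl⟩
    · exact ⟨m + j, by omega, rfl⟩
    · exact ⟨2*m + k, by omega, rfl⟩
  have hhull : ∀ S ∈ 𝒮, ∀ T ∈ 𝒮, hull S ⊆ hull T → S ⊆ T := fun S hS T hT h =>
    subset_of_hull_subset hcp (hPsub S hS) (hPsub T hT) h
  have hcard3 : ∀ S ∈ 𝒮, S.card = 3 := by
    intro S hS
    obtain ⟨i, j, k, hi, hj, hk, rfl⟩ := hmem𝒮 S hS
    exact tri_card hi hj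
  refine ⟨P, 𝒮, ?_, hcp, ?_, hPsub, ?_, ?_, ?_, ?_⟩
  · -- GenPos
    rintro a ha b hb c hc hab hac hbc hcol
    simp only [hPdef, mem_image, mem_range] at ha hb hc
    obtain ⟨s, -, rfl⟩ := ha
    obtain ⟨t, -, rfl⟩ := hb
    obtain ⟨u, -, rfl⟩ := hc
    have h0 := collinear_cross hcol
    rw [g, g, g, cross_pf] at h0
    have hst : (s:ℝ) ≠ (t:ℝ) := fun h => hab (by rw [g, g, h])
    have hsu : (s:ℝ) ≠ (u:ℝ) := fun h => hac (by rw [g, g, h])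
    have htu : (t:ℝ) ≠ (u:ℝ) := fun h => hbc (by rw [g, g, h])
    exact mul_ne_zero (mul_ne_zero (sub_ne_zero.2 hst.symm) (sub_ne_zero.2 hsu.symm))
      (sub_ne_zero.2 htu.symm) h0
  · -- card P
    rw [hPdef, card_image_of_injective _ g_inj, card_range]
  · -- hull injective
    intro S hS T hT h
    exact Finset.Subset.antisymm (hhull S hS T hT h.le) (hhull T hT S hS h.ge)
  · -- no containment
    intro S hS T hT hne hsub
    exact hne (eq_of_subset_of_card_le (hhull S hS T hT hsub)
      (by rw [hcard3 S hS, hcard3 T hT]))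
  · -- pairwise intersecting
    intro S hS T hT hne
    obtain ⟨i, j, k, hi, hj, hk, rfl⟩ := hmem𝒮 S hS
    obtain ⟨i', j', k', hi', hj', hk', rfl⟩ := hmem𝒮 T hT
    rcases lt_trichotomy i i' with hlt | rfl | hlt
    · obtain ⟨z, hz1, hz2⟩ := chords_cross (p := (i:ℝ)) (q := ((m+j : ℕ):ℝ))
        (r := ((i':ℕ):ℝ)) (s := ((2*m+k' : ℕ):ℝ))
        (by exact_mod_cast hlt) (Nat.cast_lt.2 (by omega)) (Nat.cast_lt.2 (by omega))
      exact ⟨z, seg_sub_hull tri_mem_left tri_mem_mid hz1,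
        seg_sub_hull tri_mem_left tri_mem_right hz2⟩
    · exact ⟨g i, subset_convexHull ℝ _ (Finset.mem_coe.2 tri_mem_left),
        subset_convexHull ℝ _ (Finset.mem_coe.2 tri_mem_left)⟩
    · obtain ⟨z, hz1, hz2⟩ := chords_cross (p := ((i':ℕ):ℝ)) (q := ((m+j' : ℕ):ℝ))
        (r := ((i:ℕ):ℝ)) (s := ((2*m+k : ℕ):ℝ))
        (by exact_mod_cast hlt) (Nat.cast_lt.2 (by omega)) (Nat.cast_lt.2 (by omega))
      exact ⟨z, seg_sub_hull tri_mem_left tri_mem_right hz2,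
        seg_sub_hull tri_mem_left tri_mem_mid hz1⟩
  · -- card 𝒮
    rw [h𝒮def, card_image_of_injOn, card_product, card_product, card_range, pow_succ, pow_two]
    · ring
    · rintro ⟨i, j, k⟩ hx ⟨i', j', k'⟩ hy hxy
      simp only [Finset.mem_coe, mem_product, mem_range] at hx hy
      obtain ⟨e1, e2, e3⟩ := tri_inj hx.1 hx.2.1 hy.1 hy.2.1 hxy
      simp only [Prod.mk.injEq]
      exact ⟨e1, e2, e3⟩
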